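/- Let X be a locally compact Hausdorff totally disconnected space with a continuous right action of a locally profinite group H, and let V ⊆ W be compact open subgroups of H. A point x ∈ X is (W,V)-smooth if and only if the stabilizer of x in W is contained in V. -/

import Mathlib

open Set Pointwise

/-- In a locally compact Hausdorff totally disconnected space, every point of an open set
has a compact open neighbourhood inside the open set. -/
theorem aux_exists_isCompact_isOpen_subset {X : Type*} [TopologicalSpace X]
    [LocallyCompactSpace X] [T2Space X] [TotallyDisconnectedSpace X] {U : Set X}
    (hU : IsOpen U) {x : X} (hx : x ∈ U) :
    ∃ S : Set X, IsCompact S ∧ IsOpen S ∧ x ∈ S ∧ S ⊆ U := by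
  obtain ⟨s, comp, xs, sU⟩ := exists_compact_subset hU hx
  obtain ⟨Vs, hVs, hxVs, hVsub⟩ :=
    loc_compact_Haus_tot_disc_of_zero_dim.exists_subset_of_mem_open xs isOpen_interior
  exact ⟨Vs, comp.of_isClosed_subset hVs.isClosed (hVsub.trans interior_subset), hVs.isOpen,
    hxVs, (hVsub.trans interior_subset).trans sU⟩

/-- Compact-open separation of a compact set inside an open set. -/
theorem aux_exists_isCompact_isOpen_between {X : Type*} [TopologicalSpace X]
    [LocallyCompactSpace X] [T2Space X] [TotallyDisconnectedSpace X] {A U : Set X}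
    (hA : IsCompact A) (hU : IsOpen U) (hAU : A ⊆ U) :
    ∃ S : Set X, IsCompact S ∧ IsOpen S ∧ A ⊆ S ∧ S ⊆ U := by
  have h : ∀ a : A, ∃ S : Set X, IsCompact S ∧ IsOpen S ∧ (a : X) ∈ S ∧ S ⊆ U :=
    fun a => aux_exists_isCompact_isOpen_subset hU (hAU a.2)
  choose f hfc hfo hfm hfU using h
  obtain ⟨t, ht⟩ := hA.elim_finite_subcover f hfo (fun a ha => mem_iUnion.2 ⟨⟨a, ha⟩, hfm _⟩)
  exact ⟨⋃ a ∈ t, f a, t.isCompact_biUnion (fun a _ => hfc a),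
    isOpen_biUnion (fun a _ => hfo a), ht, iUnion₂_subset fun a _ => hfU a⟩

/-- A point `x` of a locally compact Hausdorff totally disconnected space `X`, with a
continuous right action of a locally profinite group `H`, is `(W,V)`-smooth (for compact
open subgroups `V ⊆ W`) if and only if its stabilizer in `W` is contained in `V`. -/
theorem smooth_point_iff_stabilizer_le
    {X H : Type*} [TopologicalSpace X] [LocallyCompactSpace X] [T2Space X]
    [TotallyDisconnectedSpace X]
    [Group H] [TopologicalSpace H] [IsTopologicalGroup H]
    [LocallyCompactSpace H] [TotallyDisconnectedSpace H]
    (ρ : X → H → X)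
    (hρcont : Continuous fun p : X × H => ρ p.1 p.2)
    (hρone : ∀ x, ρ x 1 = x)
    (hρmul : ∀ x g h, ρ (ρ x g) h = ρ x (g * h))
    (W V : Subgroup H) (hVW : V ≤ W)
    (hWc : IsCompact (W : Set H)) (hWo : IsOpen (W : Set H))
    (hVc : IsCompact (V : Set H)) (hVo : IsOpen (V : Set H))
    (x : X) :
    (∃ Z : Set X, IsCompact Z ∧ IsOpen Z ∧ x ∈ Z ∧
        (∀ v ∈ V, ∀ z ∈ Z, ρ z v ∈ Z) ∧
        (∀ γ ∈ W, ∀ γ' ∈ W, γ * γ'⁻¹ ∉ V →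
          Disjoint ((fun z => ρ z γ) '' Z) ((fun z => ρ z γ') '' Z))) ↔
      {w : H | w ∈ W ∧ ρ x w = x} ⊆ (V : Set H) := by
  constructor
  · rintro ⟨Z, _, _, hxZ, _, hdisj⟩ w ⟨hwW, hwx⟩
    by_contra hwV
    have h1 : (1 : H) ∈ W := W.one_mem
    have hw1 : w * (1 : H)⁻¹ ∉ V := by simpa using hwV
    have := hdisj w hwW 1 h1 hw1
    exact Set.disjoint_left.1 this ⟨x, hxZ, hwx⟩ ⟨x, hxZ, hρone x⟩
  · intro hstab
    -- continuity helpers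
    have hρx : Continuous fun h : H => ρ x h :=
      hρcont.comp (continuous_const.prodMk continuous_id)
    have hρr : ∀ g : H, Continuous fun z : X => ρ z g := fun g =>
      hρcont.comp (continuous_id.prodMk continuous_const)
    -- the compact set of "bad" translations
    set K : Set H := (W : Set H) ∩ (V : Set H)ᶜ with hK
    have hKc : IsCompact K := hWc.inter_right (hVo.isClosed_compl)
    -- A = x·V, B = x·(V·K), disjoint compact sets
    set A : Set X := (fun h => ρ x h) '' (V : Set H) with hA
    set B : Set X := (fun h => ρ x h) '' ((V : Set H) * K) with hB
    have hAc : IsCompact A := hVc.image hρx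
    have hBc : IsCompact B := (hVc.mul hKc).image hρx
    have hAB : Disjoint A B := by
      rw [Set.disjoint_left]
      rintro a ⟨v, hv, rfl⟩ ⟨g, hg, hga⟩
      obtain ⟨v', hv', δ, hδ, rfl⟩ := hg
      -- ρ x (v'*δ) = ρ x v implies v'*δ*v⁻¹ stabilizes x
      have hga' : ρ x (v' * δ) = ρ x v := hga
      have hfix : ρ x (v' * δ * v⁻¹) = x := by
        have : ρ (ρ x (v' * δ)) v⁻¹ = ρ (ρ x v) v⁻¹ := by rw [hga']
        rw [hρmul, hρmul, mul_inv_cancel, hρone] at this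
        exact this
      have hmem : v' * δ * v⁻¹ ∈ W :=
        W.mul_mem (W.mul_mem (hVW hv') hδ.1) (W.inv_mem (hVW hv))
      have hinV : v' * δ * v⁻¹ ∈ V := hstab ⟨hmem, hfix⟩
      have : δ ∈ V := by
        have := V.mul_mem (V.mul_mem (V.inv_mem hv') hinV) hv
        simpa [mul_assoc] using this
      exact hδ.2 this
    -- compact open S separating A from B
    obtain ⟨S, hSc, hSo, hAS, hSB⟩ :=
      aux_exists_isCompact_isOpen_between hAc hBc.isClosed.isOpen_compl
        (fun a ha => Set.disjoint_left.1 hAB ha)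
    -- tube lemma: shrink around A so that translating by K exits S
    have hQo : IsOpen ((fun p : X × H => ρ p.1 p.2) ⁻¹' Sᶜ) :=
      hSc.isClosed.isOpen_compl.preimage hρcont
    have hAKQ : A ×ˢ K ⊆ (fun p : X × H => ρ p.1 p.2) ⁻¹' Sᶜ := by
      rintro ⟨a, δ⟩ ⟨⟨v, hv, rfl⟩, hδ⟩
      have : ρ (ρ x v) δ ∈ B := by
        rw [hρmul]
        exact ⟨v * δ, Set.mul_mem_mul hv hδ, rfl⟩
      exact fun hS => hSB (hS : _ ∈ S) this
    obtain ⟨T, T', hTo, hT'o, hAT, hKT', hTT'⟩ :=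
      generalized_tube_lemma hAc hKc hQo hAKQ
    -- compact open Y with A ⊆ Y ⊆ S ∩ T
    obtain ⟨Y, hYc, hYo, hAY, hYST⟩ :=
      aux_exists_isCompact_isOpen_between hAc (hSo.inter hTo)
        (Set.subset_inter hAS hAT)
    have hkey : ∀ z ∈ Y, ∀ δ ∈ K, ρ z δ ∉ Y := by
      intro z hz δ hδ hmem
      have : (z, δ) ∈ T ×ˢ T' := ⟨(hYST hz).2, hKT' hδ⟩
      exact (hTT' this) ((hYST hmem).1)
    -- the V-invariant core of Y
    set Z : Set X := {z | ∀ v ∈ (V : Set H), ρ z v ∈ Y} with hZ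
    have hZY : Z ⊆ Y := fun z hz => by
      have := hz 1 V.one_mem
      rwa [hρone] at this
    have hxZ : x ∈ Z := fun v hv => hAY ⟨v, hv, rfl⟩
    have hZclosed : IsClosed Z := by
      have : Z = ⋂ v ∈ (V : Set H), (fun z => ρ z v) ⁻¹' Y := by
        ext z; simp [hZ]
      rw [this]
      exact isClosed_biInter fun v _ => hYc.isClosed.preimage (hρr v)
    have hZc : IsCompact Z := hYc.of_isClosed_subset hZclosed hZY
    have hZo : IsOpen Z := by
      rw [isOpen_iff_forall_mem_open]
      intro z hz
      have hsub : {z} ×ˢ (V : Set H) ⊆ (fun p : X × H => ρ p.1 p.2) ⁻¹' Y := by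
        rintro ⟨z', v⟩ ⟨hz', hv⟩
        rw [Set.mem_singleton_iff] at hz'
        subst hz'
        exact hz v hv
      obtain ⟨T₁, T₂, hT₁o, _, hzT₁, hVT₂, hsub'⟩ :=
        generalized_tube_lemma isCompact_singleton hVc (hYo.preimage hρcont) hsub
      refine ⟨T₁, fun z' hz' v hv => hsub' (Set.mk_mem_prod hz' (hVT₂ hv)), hT₁o, hzT₁ rfl⟩
    refine ⟨Z, hZc, hZo, hxZ, ?_, ?_⟩
    · intro v hv z hz v' hv'
      rw [hρmul]
      exact hz (v * v') (V.mul_mem hv hv')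
    · intro γ hγ γ' hγ' hne
      rw [Set.disjoint_left]
      rintro a ⟨z, hz, rfl⟩ ⟨z', hz', heq⟩
      have hδK : γ * γ'⁻¹ ∈ K := ⟨W.mul_mem hγ (W.inv_mem hγ'), hne⟩
      have : ρ z (γ * γ'⁻¹) = z' := by
        have heq' : ρ z' γ' = ρ z γ := heq
        have h1 : ρ (ρ z' γ') γ'⁻¹ = ρ (ρ z γ) γ'⁻¹ := by rw [heq']
        rw [hρmul, hρmul, mul_inv_cancel, hρone] at h1
        exact h1.symm
      exact hkey z (hZY hz) (γ * γ'⁻¹) hδK (this ▸ hZY hz')
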